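/- Let q ≥ 3 and let u be the integer with base-q representation consisting of k digits equal to q−1, then a 0, then n digits equal to q−1, then a final digit e (i.e., u = e + (q^n − 1)q + (q^k − 1)q^{n+2}) with k ≥ 2, n ≥ k + 2, and 0 ≤ e ≤ q − 2. Then s_q(u) = (q−1)(n+k) + e and s_q(u^2) = (q−1)(n+1) + f(q,e), where f(q,e) = s_q((q−e)^2) + s_q(2(q−1)(q−e)) − s_q(2(q−e) − 1). -/

import Mathlib

lemma sum_single {q a : ℕ} (hq : 1 < q) (ha : a < q) : (Nat.digits q a).sum = a := by
  rcases Nat.eq_zero_or_pos a with rfl | h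
  · simp
  · rw [Nat.digits_of_lt q a (by omega) ha]; simp

lemma sum_split {q : ℕ} (hq : 1 < q) (t : ℕ) : ∀ a c : ℕ, a < q ^ t →
    (Nat.digits q (a + c * q ^ t)).sum = (Nat.digits q a).sum + (Nat.digits q c).sum := by
  induction t with
  | zero =>
    intro a c ha
    have : a = 0 := by simpa using ha
    subst this; simp
  | succ t ih =>
    intro a c ha
    have hqt : 0 < q ^ t := Nat.pow_pos (by omega)
    have hps : q ^ (t + 1) = q ^ t * q := pow_succ q t
    have hps2 : q * q ^ t = q ^ t * q := Nat.mul_comm _ _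
    rcases Nat.eq_zero_or_pos (a + c * q ^ (t + 1)) with h0 | hpos
    · have ha0 : a = 0 := by omega
      have hc0 : c = 0 := by
        rcases Nat.mul_eq_zero.mp (by omega : c * q ^ (t + 1) = 0) with h | h
        · exact h
        · omega
      subst ha0; subst hc0; simp
    · have key : a + c * q ^ (t + 1) = a % q + q * (a / q + c * q ^ t) := by
        conv_lhs => rw [← Nat.mod_add_div a q]
        ring
      have hxy : a % q ≠ 0 ∨ (a / q + c * q ^ t) ≠ 0 := by
        by_contra hcon
        push_neg at hcon
        obtain ⟨h1, h2⟩ := hcon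
        obtain ⟨h2a, h2b⟩ := Nat.add_eq_zero.mp h2
        have ha0 : a = 0 := by
          have hmd := Nat.mod_add_div a q
          rw [h1, h2a, mul_zero] at hmd
          omega
        have hc0 : c = 0 := by
          rcases Nat.mul_eq_zero.mp h2b with h | h
          · exact h
          · omega
        subst ha0; subst hc0; simp at hpos
      rw [key, Nat.digits_add q hq _ _ (Nat.mod_lt a (by omega)) hxy]
      have hdiv : a / q < q ^ t := by
        apply Nat.div_lt_of_lt_mul
        omega
      rw [List.sum_cons, ih _ _ hdiv]
      have hsa : (Nat.digits q a).sum = a % q + (Nat.digits q (a / q)).sum := by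
        rcases Nat.eq_zero_or_pos a with rfl | h
        · simp
        · rw [Nat.digits_def' hq h]; simp
      omega

lemma sub_sum {q : ℕ} (hq : 1 < q) (t : ℕ) : ∀ x : ℕ, 1 ≤ x → x ≤ q ^ t →
    (Nat.digits q (q ^ t - x)).sum + (Nat.digits q (x - 1)).sum = t * (q - 1) := by
  induction t with
  | zero =>
    intro x h1 h2
    have hx : x = 1 := by simp only [pow_zero] at h2; omega
    subst hx; simp
  | succ t ih =>
    intro x h1 h2
    have hqp : 0 < q ^ t := Nat.pow_pos (by omega)
    have hps : q ^ (t + 1) = q ^ t * q := pow_succ q t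
    have hps2 : q * q ^ t = q ^ t * q := Nat.mul_comm _ _
    set d := (x - 1) % q with hd
    set y := (x - 1) / q with hy
    have hdy : x - 1 = d + y * q := (Nat.mod_add_div' (x - 1) q).symm
    have hdq : d < q := Nat.mod_lt _ (by omega)
    have hyt : y + 1 ≤ q ^ t := by
      have : y < q ^ t := by
        rw [hy]
        apply Nat.div_lt_of_lt_mul
        omega
      omega
    have hy1q : (y + 1) * q = y * q + q := by ring
    have hyq : (y + 1) * q ≤ q ^ t * q := Nat.mul_le_mul_right q hyt
    have hsub : (q ^ t - (y + 1)) * q = q ^ t * q - (y + 1) * q := Nat.sub_mul _ _ _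
    have key : q ^ (t + 1) - x = (q - 1 - d) + (q ^ t - (y + 1)) * q := by omega
    rw [key]
    have hs1 : (Nat.digits q ((q - 1 - d) + (q ^ t - (y + 1)) * q)).sum
        = (q - 1 - d) + (Nat.digits q (q ^ t - (y + 1))).sum := by
      have h := sum_split hq 1 (q - 1 - d) (q ^ t - (y + 1)) (by rw [pow_one]; omega)
      rw [pow_one] at h
      rw [h, sum_single hq (show q - 1 - d < q by omega)]
    have hs2 : (Nat.digits q (x - 1)).sum = d + (Nat.digits q y).sum := by
      rw [hdy]
      have h := sum_split hq 1 d y (by rw [pow_one]; omega)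
      rw [pow_one] at h
      rw [h, sum_single hq hdq]
    have hih := ih (y + 1) (Nat.le_add_left 1 y) hyt
    simp only [Nat.add_sub_cancel] at hih
    rw [hs1, hs2, Nat.succ_mul]
    omega

theorem base_q_block_lemma (q k n e : ℕ) (hq : 3 ≤ q) (hk : 2 ≤ k)
    (hn : k + 2 ≤ n) (he : e ≤ q - 2) :
    (Nat.digits q (e + (q ^ n - 1) * q + (q ^ k - 1) * q ^ (n + 2))).sum
      = (q - 1) * (n + k) + e ∧
    ((Nat.digits q ((e + (q ^ n - 1) * q + (q ^ k - 1) * q ^ (n + 2)) ^ 2)).sum : ℤ)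
      = (q - 1) * (n + 1) +
        ((Nat.digits q ((q - e) ^ 2)).sum + (Nat.digits q (2 * (q - 1) * (q - e))).sum
          - ((Nat.digits q (2 * (q - e) - 1)).sum : ℤ)) := by
  have hq1 : 1 < q := by omega
  obtain ⟨t, rfl⟩ : ∃ t, n = k + t := ⟨n - k, by omega⟩
  have ht : 2 ≤ t := by omega
  set m := q - e with hm
  have hm2 : 2 ≤ m := by omega
  have hmq : m ≤ q := by omega
  have heq : e < q := by omega
  -- power facts
  have p1 : 1 ≤ q ^ (k + t) := Nat.one_le_pow _ _ (by omega)
  have p2 : 1 ≤ q ^ k := Nat.one_le_pow _ _ (by omega)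
  have hq2 : q ^ 2 = q * q := sq q
  have h2qq : 2 * q ≤ q * q := Nat.mul_le_mul_right q (by omega)
  have hq2t : q ^ 2 ≤ q ^ t := Nat.pow_le_pow_right (by omega) ht
  have p2m : 2 * m ≤ q ^ t := by omega
  have hq2k1 : q ^ 2 ≤ q ^ (k + 1) := Nat.pow_le_pow_right (by omega) (by omega)
  have p2q : 2 * q - 2 ≤ q ^ (k + 1) := by omega
  have hP : q ^ 2 < q ^ (k + t + 1) := Nat.pow_lt_pow_right hq1 (by omega)
  have hm2q : m ^ 2 ≤ q ^ 2 := Nat.pow_le_pow_left hmq 2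
  have mm : m ^ 2 < q ^ (k + t + 1) := by omega
  -- Part 1
  have h1 : e + (q ^ (k + t) - 1) * q + (q ^ k - 1) * q ^ (k + t + 2)
      = e + ((q ^ (k + t) - 1) + (q ^ k - 1) * q ^ (k + t + 1)) * q ^ 1 := by
    zify [p1, p2]
    ring
  have hlt1 : q ^ (k + t) - 1 < q ^ (k + t + 1) := by
    have : q ^ (k + t) ≤ q ^ (k + t + 1) := Nat.pow_le_pow_right (by omega) (by omega)
    omega
  have s3 : (Nat.digits q (q ^ (k + t) - 1)).sum = (k + t) * (q - 1) := by
    have h := sub_sum hq1 (k + t) 1 le_rfl p1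
    simpa using h
  have s4 : (Nat.digits q (q ^ k - 1)).sum = k * (q - 1) := by
    have h := sub_sum hq1 k 1 le_rfl p2
    simpa using h
  have part1 : (Nat.digits q (e + (q ^ (k + t) - 1) * q + (q ^ k - 1) * q ^ (k + t + 2))).sum
      = (q - 1) * (k + t + k) + e := by
    rw [h1, sum_split hq1 1 e _ (by rw [pow_one]; omega),
      sum_split hq1 (k + t + 1) _ _ hlt1, s3, s4, sum_single hq1 heq]
    generalize q - 1 = w
    ring
  refine ⟨part1, ?_⟩
  -- Part 2
  have key : (e + (q ^ (k + t) - 1) * q + (q ^ k - 1) * q ^ (k + t + 2)) ^ 2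
      = (m ^ 2 + (2 * (q - 1) * m) * q ^ (k + t + 1))
        + ((q ^ t - 2 * m)
            + ((q - 2) * q ^ 1 + (q ^ (k + 1) - (2 * q - 2)) * q ^ (k + 1)) * q ^ t)
          * q ^ (2 * k + t + 2) := by
    have hez : (m : ℤ) = (q : ℤ) - (e : ℤ) := by omega
    zify [p1, p2, p2m, p2q, show 2 ≤ 2 * q by omega, show 1 ≤ q by omega,
      show 2 ≤ q by omega]
    rw [hez]
    ring
  -- bound for the outer split
  have hL : m ^ 2 + (2 * (q - 1) * m) * q ^ (k + t + 1) < q ^ (2 * k + t + 2) := by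
    have hsplitpow : q ^ (2 * k + t + 2) = q ^ (k + 1) * q ^ (k + t + 1) := by
      rw [← pow_add]; congr 1; omega
    have hq3 : q ^ 3 ≤ q ^ (k + 1) := Nat.pow_le_pow_right (by omega) (by omega)
    have h2qm : 2 * (q - 1) * m ≤ 2 * q * q :=
      Nat.mul_le_mul (Nat.mul_le_mul_left 2 (by omega)) hmq
    have step1 : m ^ 2 + (2 * (q - 1) * m) * q ^ (k + t + 1)
        ≤ q ^ 2 + (2 * q * q) * q ^ (k + t + 1) :=
      Nat.add_le_add hm2q (Nat.mul_le_mul_right _ h2qm)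
    have hA1 : q ^ 2 < q ^ 2 * q ^ (k + t + 1) := by
      have hgt : 1 < q ^ (k + t + 1) := Nat.one_lt_pow (by omega) hq1
      calc q ^ 2 = q ^ 2 * 1 := (mul_one _).symm
        _ < q ^ 2 * q ^ (k + t + 1) := mul_lt_mul_of_pos_left hgt (by positivity)
    have h3A : 3 * (q ^ 2 * q ^ (k + t + 1)) ≤ q * (q ^ 2 * q ^ (k + t + 1)) :=
      Nat.mul_le_mul_right _ hq
    have hqA : q * (q ^ 2 * q ^ (k + t + 1)) = q ^ 3 * q ^ (k + t + 1) := by ring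
    have h2e : 2 * q * q * q ^ (k + t + 1) = 2 * (q ^ 2 * q ^ (k + t + 1)) := by ring
    have step2 : q ^ 2 + (2 * q * q) * q ^ (k + t + 1) < q ^ 3 * q ^ (k + t + 1) := by
      rw [hqA] at h3A
      omega
    have step3 : q ^ 3 * q ^ (k + t + 1) ≤ q ^ (k + 1) * q ^ (k + t + 1) :=
      Nat.mul_le_mul_right _ hq3
    omega
  have hq2e : (q - 2) * q ^ 1 < q ^ (k + 1) := by
    have : (q - 2) * q < q * q := Nat.mul_lt_mul_of_lt_of_le (by omega) le_rfl (by omega)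
    rw [pow_one]
    omega
  -- digit sums of the blocks
  have hqtpos : 0 < q ^ t := Nat.pow_pos (by omega)
  have sA : (Nat.digits q (q ^ t - 2 * m)).sum + (Nat.digits q (2 * m - 1)).sum
      = t * (q - 1) := sub_sum hq1 t (2 * m) (by omega) p2m
  have sC : (Nat.digits q (q ^ (k + 1) - (2 * q - 2))).sum
      + (Nat.digits q (2 * q - 2 - 1)).sum = (k + 1) * (q - 1) :=
    sub_sum hq1 (k + 1) (2 * q - 2) (by omega) p2q
  have s2q3 : (Nat.digits q (2 * q - 2 - 1)).sum = q - 2 := by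
    have hrw : 2 * q - 2 - 1 = (q - 3) + 1 * q ^ 1 := by rw [pow_one]; omega
    rw [hrw, sum_split hq1 1 (q - 3) 1 (by rw [pow_one]; omega),
      sum_single hq1 (show q - 3 < q by omega), sum_single hq1 (show 1 < q by omega)]
    omega
  have sQ2 : (Nat.digits q ((q - 2) * q ^ 1)).sum = q - 2 := by
    have hrw : (q - 2) * q ^ 1 = 0 + (q - 2) * q ^ 1 := by omega
    rw [hrw, sum_split hq1 1 0 (q - 2) (by rw [pow_one]; omega)]
    simp [sum_single hq1 (show q - 2 < q by omega)]
  have main : (Nat.digits q ((e + (q ^ (k + t) - 1) * q + (q ^ k - 1) * q ^ (k + t + 2)) ^ 2)).sum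
      = (Nat.digits q (m ^ 2)).sum + (Nat.digits q (2 * (q - 1) * m)).sum
        + ((Nat.digits q (q ^ t - 2 * m)).sum
          + ((q - 2) + (Nat.digits q (q ^ (k + 1) - (2 * q - 2))).sum)) := by
    rw [key, sum_split hq1 (2 * k + t + 2) _ _ hL,
      sum_split hq1 (k + t + 1) _ _ mm,
      sum_split hq1 t _ _ (by omega),
      sum_split hq1 (k + 1) _ _ hq2e, sQ2]
  rw [main]
  have hc1 : ((q - 1 : ℕ) : ℤ) = (q : ℤ) - 1 := by omega
  have hc2 : ((q - 2 : ℕ) : ℤ) = (q : ℤ) - 2 := by omega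
  have zA : ((Nat.digits q (q ^ t - 2 * m)).sum : ℤ)
      + ((Nat.digits q (2 * m - 1)).sum : ℤ) = (t : ℤ) * ((q : ℤ) - 1) := by
    rw [← Nat.cast_add, sA, Nat.cast_mul, hc1]
  rw [s2q3] at sC
  have zC := congrArg (Nat.cast (R := ℤ)) sC
  simp only [Nat.cast_add, Nat.cast_mul, Nat.cast_one, hc1, hc2] at zC
  have hr : ((q : ℤ) - 1) * (((k + t : ℕ) : ℤ) + 1)
      = (t : ℤ) * ((q : ℤ) - 1) + (((k : ℤ) + 1) * ((q : ℤ) - 1)) := by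
    push_cast
    ring
  have hgoal : (((Nat.digits q (m ^ 2)).sum + (Nat.digits q (2 * (q - 1) * m)).sum
        + ((Nat.digits q (q ^ t - 2 * m)).sum
          + ((q - 2) + (Nat.digits q (q ^ (k + 1) - (2 * q - 2))).sum)) : ℕ) : ℤ)
      = ((Nat.digits q (m ^ 2)).sum : ℤ) + ((Nat.digits q (2 * (q - 1) * m)).sum : ℤ)
        + (((Nat.digits q (q ^ t - 2 * m)).sum : ℤ)
          + (((q : ℤ) - 2) + ((Nat.digits q (q ^ (k + 1) - (2 * q - 2))).sum : ℤ))) := by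
    simp only [Nat.cast_add, hc2]
  rw [hgoal]
  linarith [zA, zC, hr]
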